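/- Let π : X → Y be a quotient map, X geodesic with boundedness constant k finite, and let φ₀ : Y → X be an intrinsically (L,α)-Hölder section satisfying d(φ₀(y₁), φ₀(y₂)) ≤ L·d(φ₀(y₁), π⁻¹(y₂))^α. Let φ : Y → X be a section of π with φ(y₀) = φ₀(y₀) =: x₀. If there exist L₁ ≥ 1 and β ∈ (0,1) such that d(φ(y), φ₀(y)) ≤ L₁·d(φ₀(ŷ), φ₀(y))^β + d(φ₀(ŷ), φ₀(y)) for all y ∈ Y (where φ₀(ŷ) = x₀), then there exists L₂ ≥ 1 (explicitly, L₂ = L·K·(L₁+1) where K depends on L, k) such that d(φ(y), x₀) ≤ L₂·d(x₀, π⁻¹(y))^{βα} for all y ∈ Y. -/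
import Mathlib


open Metric Set

/-- If `φ` is intrinsically `(L₁,β)`-Hölder with respect to an intrinsically
`(L,α)`-Hölder section `φ₀` at `x₀ = φ₀ y₀ = φ y₀`, then
`d(φ y, x₀) ≤ L₂ · d(x₀, π⁻¹ y)^(βα)` for some constant `L₂ ≥ 1`. -/
theorem stmt9 {X Y : Type*} [MetricSpace X] [TopologicalSpace Y]
    (π : X → Y) (hπc : Continuous π) (hπo : IsOpenMap π) (hπs : Function.Surjective π)
    (hgeo : ∀ x z : X, ∀ n : ℕ, 0 < n → ∃ p : ℕ → X, p 0 = x ∧ p n = z ∧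
      ∀ i < n, dist (p i) (p (i + 1)) = dist x z / n)
    (φ₀ : Y → X) (hsec₀ : ∀ y, π (φ₀ y) = y)
    (L α : ℝ) (hL : 1 ≤ L) (hα : α ∈ Set.Ioo (0:ℝ) 1)
    (k : ℝ) (hk : ∀ y₁ y₂ : Y, infDist (φ₀ y₁) (π ⁻¹' {y₂}) ≤ k)
    (hφ₀ : ∀ y₁ y₂ : Y, dist (φ₀ y₁) (φ₀ y₂) ≤ L * (infDist (φ₀ y₁) (π ⁻¹' {y₂})) ^ α)
    (φ : Y → X) (hsec : ∀ y, π (φ y) = y)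
    (y₀ : Y) (hy₀ : φ y₀ = φ₀ y₀)
    (L₁ β : ℝ) (hL₁ : 1 ≤ L₁) (hβ : β ∈ Set.Ioo (0:ℝ) 1)
    (hφ : ∀ y : Y, dist (φ y) (φ₀ y) ≤
      L₁ * (dist (φ₀ y₀) (φ₀ y)) ^ β + dist (φ₀ y₀) (φ₀ y)) :
    ∃ L₂ ≥ (1:ℝ), ∀ y : Y,
      dist (φ y) (φ₀ y₀) ≤ L₂ * (infDist (φ₀ y₀) (π ⁻¹' {y})) ^ (β * α) := by
  obtain ⟨hα0, hα1⟩ := hα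
  obtain ⟨hβ0, hβ1⟩ := hβ
  set M := max k 1 with hMdef
  have hM1 : (1:ℝ) ≤ M := le_max_right _ _
  refine ⟨L₁ * L + 2 * L * M, by nlinarith, ?_⟩
  intro y
  rw [mul_comm β α]
  set D := infDist (φ₀ y₀) (π ⁻¹' {y}) with hDdef
  have hD0 : 0 ≤ D := infDist_nonneg
  have hDM : D ≤ M := le_trans (hk y₀ y) (le_max_left _ _)
  set t := dist (φ₀ y₀) (φ₀ y) with htdef
  have ht0 : 0 ≤ t := dist_nonneg
  have hT : t ≤ L * D ^ α := hφ₀ y₀ y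
  set P := D ^ (α * β) with hPdef
  have hP0 : 0 ≤ P := Real.rpow_nonneg hD0 _
  have h1 : t ^ β ≤ L ^ β * P := by
    calc t ^ β ≤ (L * D ^ α) ^ β := Real.rpow_le_rpow ht0 hT hβ0.le
    _ = L ^ β * (D ^ α) ^ β :=
        Real.mul_rpow (by linarith) (Real.rpow_nonneg hD0 _)
    _ = L ^ β * P := by rw [hPdef, Real.rpow_mul hD0]
  have hLβ : L ^ β ≤ L := by
    calc L ^ β ≤ L ^ (1:ℝ) := Real.rpow_le_rpow_of_exponent_le hL hβ1.le
    _ = L := Real.rpow_one L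
  have h2 : D ^ α ≤ M * P := by
    have hsum : α * β + α * (1 - β) = α := by ring
    have hsplit : D ^ α = P * D ^ (α * (1 - β)) := by
      rw [hPdef, ← Real.rpow_add' hD0 (by rw [hsum]; positivity), hsum]
    have hle : D ^ (α * (1 - β)) ≤ M := by
      calc D ^ (α * (1 - β)) ≤ M ^ (α * (1 - β)) :=
            Real.rpow_le_rpow hD0 hDM (by nlinarith)
      _ ≤ M ^ (1:ℝ) := Real.rpow_le_rpow_of_exponent_le hM1 (by nlinarith)
      _ = M := Real.rpow_one M
    calc D ^ α = P * D ^ (α * (1 - β)) := hsplit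
    _ ≤ P * M := by
        exact mul_le_mul_of_nonneg_left hle hP0
    _ = M * P := mul_comm _ _
  have tri : dist (φ y) (φ₀ y₀) ≤ dist (φ y) (φ₀ y) + t := by
    rw [htdef, dist_comm (φ₀ y₀)]
    exact dist_triangle _ _ _
  have hφy := hφ y
  have a1 : L₁ * t ^ β ≤ L₁ * (L * P) := by
    have : t ^ β ≤ L * P :=
      le_trans h1 (mul_le_mul_of_nonneg_right hLβ hP0)
    exact mul_le_mul_of_nonneg_left this (by linarith)
  have a2 : t ≤ L * (M * P) := by
    calc t ≤ L * D ^ α := hT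
    _ ≤ L * (M * P) := mul_le_mul_of_nonneg_left h2 (by linarith)
  nlinarith [a1, a2, tri, hφy]
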